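/- Let n ≥ 1 and let A be the complex algebra with basis e_0, e_1, …, e_n and multiplication e_i ⋄ e_j = (i/(j+1))·e_{i+j} if i+j ≤ n and e_i ⋄ e_j = 0 otherwise (the algebra IDD(K^0_n, 1, −1)). Then Der(A) is the one-dimensional linear span of the derivation φ defined on the basis by φ(e_i) = i·e_i for 0 ≤ i ≤ n. -/

import Mathlib

/-- The basis index set `{0, …, n}`. -/
abbrev Ix (n : ℕ) := ↥(Finset.Icc 0 n)

/-- The vector space with basis `e_0, …, e_n`; the `p`-th coordinate of a vector is its
coefficient at `e_p` (so `e_i = Pi.single i 1`). -/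
abbrev V (n : ℕ) := Ix n → ℂ

/-- The multiplication of `IDD(K^0_n, 1, −1)`: `e_i ⋄ e_j = (i/(j+1))·e_{i+j}` if `i+j ≤ n` and `0` otherwise. -/
noncomputable def mulA (n : ℕ) (x y : V n) : V n := fun p =>
  ∑ i : Ix n, ∑ j : Ix n, x i * y j * (if i.1 + j.1 = p.1 then (i.1 : ℂ) * ((j.1 : ℂ) + 1)⁻¹ else 0)

/-- `D` is a derivation of `IDD(K^0_n, 1, −1)`. -/
def IsDer (n : ℕ) (D : V n →ₗ[ℂ] V n) : Prop :=
  ∀ x y, D (mulA n x y) = mulA n (D x) y + mulA n x (D y)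

/-- The derivation `φ(e_i) = i·e_i`. -/
noncomputable def phiD (n : ℕ) : V n →ₗ[ℂ] V n :=
  Matrix.mulVecLin (fun p s : Ix n => if p = s then (s.1 : ℂ) else 0)

/-! ### Auxiliary lemmas -/

lemma phiD_apply (n : ℕ) (x : V n) (p : Ix n) : phiD n x p = (p.1 : ℂ) * x p := by
  show Matrix.mulVec (Matrix.of fun p s : Ix n => if p = s then (s.1 : ℂ) else 0) x p = _
  simp [phiD, Matrix.mulVecLin_apply, Matrix.mulVec, dotProduct, ite_mul]

/-- The basis vectors. -/
def eb {n : ℕ} (i : Ix n) : V n := Pi.single i 1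

lemma eb_apply {n : ℕ} (i p : Ix n) : eb i p = if p = i then 1 else 0 := by
  simp [eb, Pi.single_apply]

def e0 {n : ℕ} : Ix n := ⟨0, by simp⟩

lemma mulA_eb_eb {n : ℕ} (i j : Ix n) :
    mulA n (eb i) (eb j) = fun p => if i.1 + j.1 = p.1 then (i.1 : ℂ) * ((j.1 : ℂ) + 1)⁻¹ else 0 := by
  funext p
  simp only [mulA, eb_apply, ite_mul, one_mul, zero_mul, mul_ite, mul_zero, mul_one]
  rw [Fintype.sum_eq_single i (fun b hb => ?_), Fintype.sum_eq_single j (fun b hb => ?_)]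
  · split_ifs <;> simp_all
  · split_ifs <;> simp_all
  · apply Finset.sum_eq_zero; intro c _; split_ifs <;> simp_all

lemma mulA_e0_left {n : ℕ} (y : V n) : mulA n (eb e0) y = 0 := by
  funext p
  simp only [mulA, Pi.zero_apply]
  apply Finset.sum_eq_zero; intro i _
  apply Finset.sum_eq_zero; intro j _
  rcases eq_or_ne i e0 with h | h
  · subst h; split_ifs <;> simp [e0]
  · simp [eb_apply, h]

lemma mulA_e0_right {n : ℕ} (x : V n) : mulA n x (eb e0) = phiD n x := by
  funext p
  simp only [mulA, phiD_apply]
  rw [Finset.sum_comm]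
  rw [Fintype.sum_eq_single (e0 : Ix n) (fun b hb => ?_)]
  · rw [Fintype.sum_eq_single p (fun b hb => ?_)]
    · simp [eb_apply, e0]; ring
    · have : b.1 + (e0 : Ix n).1 ≠ p.1 := by
        simp only [e0]; intro h; apply hb; exact Subtype.ext (by simpa using h)
      simp [this]
  · apply Finset.sum_eq_zero; intro i _
    simp [eb_apply, hb]

lemma mulA_smul_left {n : ℕ} (c : ℂ) (x y : V n) : mulA n (c • x) y = c • mulA n x y := by
  funext p
  simp only [mulA, Pi.smul_apply, smul_eq_mul, Finset.mul_sum]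
  congr 1; funext i; congr 1; funext j; ring

lemma mulA_smul_right {n : ℕ} (c : ℂ) (x y : V n) : mulA n x (c • y) = c • mulA n x y := by
  funext p
  simp only [mulA, Pi.smul_apply, smul_eq_mul, Finset.mul_sum]
  congr 1; funext i; congr 1; funext j; ring

lemma phi_der (n : ℕ) (x y : V n) :
    phiD n (mulA n x y) = mulA n (phiD n x) y + mulA n x (phiD n y) := by
  funext p
  simp only [phiD_apply, mulA, Pi.add_apply]
  rw [Finset.mul_sum, ← Finset.sum_add_distrib]
  apply Finset.sum_congr rfl; intro i _
  rw [Finset.mul_sum, ← Finset.sum_add_distrib]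
  apply Finset.sum_congr rfl; intro j _
  split_ifs with h
  · rw [← h]; push_cast; ring
  · ring

lemma phiD_eb {n : ℕ} (i : Ix n) : phiD n (eb i) = (i.1 : ℂ) • eb i := by
  funext p
  simp only [phiD_apply, eb_apply, Pi.smul_apply, smul_eq_mul]
  split_ifs with h
  · subst h; ring
  · ring

/-- Forward direction: every derivation is a multiple of `phiD`. -/
lemma der_eq_smul_phi (n : ℕ) (hn : 1 ≤ n) (D : V n →ₗ[ℂ] V n) (hD : IsDer n D) :
    ∃ a : ℂ, a • phiD n = D := by
  set u : Ix n := ⟨1, by simp [hn]⟩ with hu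
  -- D(e₀) is a multiple of e₀
  have h00 := hD (eb e0) (eb e0)
  rw [mulA_e0_left, map_zero, mulA_e0_right, mulA_e0_left] at h00
  set c : ℂ := D (eb e0) e0 with hc
  have hDe0 : D (eb e0) = c • eb e0 := by
    funext p
    rcases eq_or_ne p e0 with h | h
    · subst h; simp [eb_apply, hc]
    · have := congrFun h00.symm p
      simp only [Pi.add_apply, Pi.zero_apply, phiD_apply, add_zero] at this
      have hp0 : (p.1 : ℂ) ≠ 0 := by
        simp only [Nat.cast_ne_zero]
        intro h0; exact h (Subtype.ext h0)
      have := (mul_eq_zero.mp this).resolve_left hp0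
      simp [this, eb_apply, h]
  -- the key commutation relation
  have hx : ∀ x, D (phiD n x) = phiD n (D x) + c • phiD n x := by
    intro x
    have := hD x (eb e0)
    rwa [mulA_e0_right, mulA_e0_right, hDe0, mulA_smul_right, mulA_e0_right] at this
  have hkey : ∀ i : Ix n, (i.1 : ℂ) • D (eb i) = phiD n (D (eb i)) + (c * i.1) • eb i := by
    intro i
    have := hx (eb i)
    rw [phiD_eb, map_smul] at this
    rw [this, smul_smul]
  -- c = 0
  have hc0 : c = 0 := by
    have := congrFun (hkey u) u
    simp only [Pi.smul_apply, smul_eq_mul, Pi.add_apply, phiD_apply, eb_apply,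
      eq_self_iff_true, if_true, mul_one] at this
    have hu1 : ((u.1 : ℕ) : ℂ) = 1 := by rw [hu]; norm_num
    rw [hu1] at this
    linear_combination -this
  -- D is diagonal
  set lam : Ix n → ℂ := fun i => D (eb i) i with hlam
  have hdiag : ∀ i : Ix n, D (eb i) = lam i • eb i := by
    intro i
    funext p
    rcases eq_or_ne p i with h | h
    · subst h; simp [eb_apply, hlam]
    · have := congrFun (hkey i) p
      simp only [Pi.smul_apply, smul_eq_mul, Pi.add_apply, phiD_apply, eb_apply, if_neg h,
        mul_zero, add_zero] at this
      have hip : (i.1 : ℂ) ≠ (p.1 : ℂ) := by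
        simp only [Ne, Nat.cast_inj]
        intro h0; exact h (Subtype.ext h0.symm)
      have : ((i.1 : ℂ) - p.1) * D (eb i) p = 0 := by linear_combination this
      have := (mul_eq_zero.mp this).resolve_left (sub_ne_zero.mpr hip)
      simp [this, eb_apply, h]
  -- the recurrence
  have hrec : ∀ k (hk : k ≤ n) (hk1 : k + 1 ≤ n),
      lam ⟨k + 1, by simp [hk1]⟩ = lam u + lam ⟨k, by simp [hk]⟩ := by
    intro k hk hk1
    have hjk : k ∈ Finset.Icc 0 n := by simp [hk]
    have hq : k + 1 ∈ Finset.Icc 0 n := by simp [hk1]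
    have hm : mulA n (eb u) (eb ⟨k, hjk⟩) = ((k : ℂ) + 1)⁻¹ • eb (⟨k + 1, hq⟩ : Ix n) := by
      rw [mulA_eb_eb]
      funext p
      rw [Pi.smul_apply, eb_apply, smul_eq_mul]
      rcases eq_or_ne p (⟨k + 1, hq⟩ : Ix n) with h | h
      · subst h
        rw [if_pos rfl, mul_one, if_pos (show u.1 + k = k + 1 by show 1 + k = k + 1; omega)]
        rw [hu]
        push_cast
        ring
      · rw [if_neg h, mul_zero]
        rw [if_neg]
        intro h0
        apply h
        apply Subtype.ext
        have h1 : 1 + k = p.1 := h0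
        show p.1 = k + 1
        omega
    have h := hD (eb u) (eb ⟨k, hjk⟩)
    rw [hm, map_smul, hdiag u, hdiag ⟨k, hjk⟩, mulA_smul_left, mulA_smul_right, hm,
      hdiag ⟨k + 1, hq⟩] at h
    have h2 := congrFun h (⟨k + 1, hq⟩ : Ix n)
    simp only [Pi.smul_apply, smul_eq_mul, Pi.add_apply, eb_apply, eq_self_iff_true, if_true,
      mul_one] at h2
    have hne : ((k : ℂ) + 1) ≠ 0 := by
      intro h0
      have := congrArg Complex.re h0
      push_cast at this
      simp at this
      linarith [Nat.cast_nonneg (α := ℝ) k]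
    apply mul_left_cancel₀ (inv_ne_zero hne)
    rw [mul_add]
    linear_combination h2
  -- lam k = k * lam u
  have hlamf : ∀ k (hk : k ≤ n), lam ⟨k, by simp [hk]⟩ = (k : ℂ) * lam u := by
    intro k
    induction k with
    | zero =>
      intro _
      have : lam (e0 : Ix n) = c := rfl
      simp only [Nat.cast_zero, zero_mul]
      rw [show (⟨0, by simp⟩ : Ix n) = e0 from rfl, this, hc0]
    | succ k ih =>
      intro hk1
      have hk : k ≤ n := Nat.le_of_succ_le hk1
      rw [hrec k hk hk1, ih hk]
      push_cast; ring
  have hlam_all : ∀ i : Ix n, lam i = (i.1 : ℂ) * lam u := by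
    intro i
    have hi : i.1 ≤ n := (Finset.mem_Icc.mp i.2).2
    have := hlamf i.1 hi
    rwa [show (⟨i.1, by simp [hi]⟩ : Ix n) = i from Subtype.ext rfl] at this
  refine ⟨lam u, LinearMap.ext fun x => ?_⟩
  have hxsum : x = ∑ i : Ix n, x i • eb i := by
    funext p
    rw [Finset.sum_apply]
    simp [eb_apply, mul_ite]
  conv_rhs => rw [hxsum]
  rw [map_sum]
  simp only [map_smul]
  funext p
  rw [Finset.sum_apply, LinearMap.smul_apply, Pi.smul_apply, phiD_apply, smul_eq_mul]
  have hterm : ∀ i : Ix n, (x i • D (eb i)) p = if p = i then x i * lam i else 0 := by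
    intro i
    rcases eq_or_ne p i with h | h <;> simp [hdiag i, eb_apply, h]
  rw [Finset.sum_congr rfl fun i _ => hterm i, Fintype.sum_ite_eq p (fun i => x i * lam i),
    hlam_all p]
  ring

theorem stmt16 (n : ℕ) (hn : 1 ≤ n) :
    {D : V n →ₗ[ℂ] V n | IsDer n D}
      = (Submodule.span ℂ {phiD n} : Submodule ℂ (V n →ₗ[ℂ] V n))
    ∧ phiD n ≠ 0 := by
  constructor
  · ext D
    simp only [Set.mem_setOf_eq, SetLike.mem_coe, Submodule.mem_span_singleton]
    constructor
    · exact der_eq_smul_phi n hn D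
    · rintro ⟨a, rfl⟩
      intro x y
      simp only [LinearMap.smul_apply]
      rw [phi_der, smul_add, ← mulA_smul_left, ← mulA_smul_right]
  · intro h
    set u : Ix n := ⟨1, by simp [hn]⟩ with hu
    have := congrFun (congrArg (fun f => f (eb u)) h) u
    simp only [LinearMap.zero_apply, Pi.zero_apply, phiD_apply, eb_apply, if_pos rfl,
      mul_one] at this
    rw [hu] at this
    norm_num at this
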